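/- Let L be a Lie algebra over a field K of characteristic zero and let (h,e,f) be an sl₂-triple in L such that ad(e) and ad(f) are nilpotent endomorphisms of L. Let θ = exp(ad e) ∘ exp(ad(−f)) ∘ exp(ad e), a Lie algebra automorphism of L. Then θ(e) = −f, θ(f) = −e, and θ(h) = −h. -/

import Mathlib

/-- The exponential `exp D = Σₙ Dⁿ/n!` of an endomorphism `D`.  For a nilpotent `D` this
is the usual exponential, since the sum ranges over all `n` with `D ^ n ≠ 0`
(`D ^ n = 0` whenever `n ≥ nilpotencyClass D`). -/
noncomputable def expEnd {K M : Type*} [Field K] [AddCommGroup M] [Module K M]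
    (D : Module.End K M) : Module.End K M :=
  ∑ n ∈ Finset.range (nilpotencyClass D + 1), (n.factorial : K)⁻¹ • D ^ n

lemma expEnd_apply3 {K M : Type*} [Field K] [AddCommGroup M] [Module K M]
    (D : Module.End K M) (hD : IsNilpotent D) (x a b : M)
    (hx : D x = a) (ha : D a = b) (hb : D b = 0) :
    expEnd D x = x + a + (2 : K)⁻¹ • b := by
  have h3 : ∀ n, 3 ≤ n → (D ^ n) x = 0 := by
    intro n hn
    have h' : D ^ n = D ^ (n - 3) * D ^ 3 := by
      rw [← pow_add]; congr 1; omega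
    have h3' : (D ^ 3) x = 0 := by
      show D (D (D x)) = 0
      rw [hx, ha, hb]
    rw [h', Module.End.mul_apply, h3', map_zero]
  have hN : ∀ n, nilpotencyClass D + 1 ≤ n → (D ^ n) x = 0 := by
    intro n hn
    have h0 : D ^ nilpotencyClass D = 0 := pow_nilpotencyClass hD
    have : D ^ n = 0 := pow_eq_zero_of_le (by omega) h0
    simp [this]
  have key : (expEnd D) x = ∑ n ∈ Finset.range 3, (n.factorial : K)⁻¹ • (D ^ n) x := by
    rw [expEnd, LinearMap.sum_apply]
    simp only [LinearMap.smul_apply]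
    rcases le_or_gt (nilpotencyClass D + 1) 3 with hc | hc
    · apply Finset.sum_subset (Finset.range_subset_range.2 hc)
      intro n hn hn'
      rw [hN n (by simpa using hn'), smul_zero]
    · symm
      apply Finset.sum_subset (Finset.range_subset_range.2 hc.le)
      intro n hn hn'
      rw [h3 n (by simpa using hn'), smul_zero]
  rw [key, Finset.sum_range_succ, Finset.sum_range_succ, Finset.sum_range_one]
  have hx0 : (D ^ 0) x = x := rfl
  have hx1 : (D ^ 1) x = a := by simpa using hx
  have hx2 : (D ^ 2) x = b := by
    show D (D x) = b
    rw [hx, ha]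
  rw [hx0, hx1, hx2]
  norm_num

/-- Let `(h, e, f)` be an `sl₂`-triple in a Lie algebra `L` over a field of characteristic
zero such that `ad e` and `ad f` are nilpotent, and let
`θ = exp(ad e) ∘ exp(ad (−f)) ∘ exp(ad e)`.  Then `θ e = −f`, `θ f = −e` and `θ h = −h`. -/
theorem weyl_element_on_sl2_triple
    {K L : Type*} [Field K] [CharZero K] [LieRing L] [LieAlgebra K L]
    (h e f : L) (he : e ≠ 0) (hf : f ≠ 0)
    (hhe : ⁅h, e⁆ = (2 : K) • e) (hhf : ⁅h, f⁆ = (-2 : K) • f) (hef : ⁅e, f⁆ = h)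
    (hnile : IsNilpotent (LieAlgebra.ad K L e)) (hnilf : IsNilpotent (LieAlgebra.ad K L f))
    (θ : Module.End K L)
    (hθ : θ = expEnd (LieAlgebra.ad K L e) * expEnd (LieAlgebra.ad K L (-f)) *
      expEnd (LieAlgebra.ad K L e)) :
    θ e = -f ∧ θ f = -e ∧ θ h = -h := by
  set De := LieAlgebra.ad K L e with hDe
  set Df := LieAlgebra.ad K L (-f) with hDf
  have hnilf' : IsNilpotent Df := by
    have hD : Df = -(LieAlgebra.ad K L f) := by rw [hDf, map_neg]
    rw [hD]; exact hnilf.neg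
  have adee : De e = 0 := by simp [hDe, LieAlgebra.ad_apply]
  have adef : De f = h := by simp [hDe, LieAlgebra.ad_apply, hef]
  have adeh : De h = -((2 : K) • e) := by
    rw [hDe, LieAlgebra.ad_apply, ← lie_skew, hhe]
  have adfe : Df e = h := by
    rw [hDf, LieAlgebra.ad_apply, neg_lie, lie_skew, hef]
  have adff : Df f = 0 := by simp [hDf, LieAlgebra.ad_apply]
  have adfh : Df h = (-2 : K) • f := by
    rw [hDf, LieAlgebra.ad_apply, neg_lie, lie_skew, hhf]
  have Ee : expEnd De e = e := by
    rw [expEnd_apply3 De hnile e 0 0 adee (map_zero _) (map_zero _)]; simp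
  have Eh : expEnd De h = h - (2 : K) • e := by
    rw [expEnd_apply3 De hnile h (-((2 : K) • e)) 0 adeh (by simp [adee]) (map_zero _)]
    module
  have Ef : expEnd De f = f + h - e := by
    rw [expEnd_apply3 De hnile f h (-((2 : K) • e)) adef adeh (by simp [adee])]
    rw [smul_neg, smul_smul]
    norm_num
    module
  have Fe : expEnd Df e = e + h - f := by
    rw [expEnd_apply3 Df hnilf' e h ((-2 : K) • f) adfe adfh (by simp [adff])]
    rw [smul_smul]
    norm_num
    module
  have Ff : expEnd Df f = f := by
    rw [expEnd_apply3 Df hnilf' f 0 0 adff (map_zero _) (map_zero _)]; simp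
  have Fh : expEnd Df h = h + (-2 : K) • f := by
    rw [expEnd_apply3 Df hnilf' h ((-2 : K) • f) 0 adfh (by simp [adff]) (map_zero _)]
    simp
  have hθ' : ∀ x, θ x = expEnd De (expEnd Df (expEnd De x)) := by
    intro x; rw [hθ]; rfl
  refine ⟨?_, ?_, ?_⟩
  · simp only [hθ', Ee, Ef, Eh, Fe, Ff, Fh, map_add, map_sub, map_neg, map_smul]
    module
  · simp only [hθ', Ee, Ef, Eh, Fe, Ff, Fh, map_add, map_sub, map_neg, map_smul]
    module
  · simp only [hθ', Ee, Ef, Eh, Fe, Ff, Fh, map_add, map_sub, map_neg, map_smul]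
    module
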